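/- Let X be a finite alphabet, X₁ ∈ X^N i.i.d. from P₁ with N = αn, and X_t ∈ X^n i.i.d. from P₁ (independent of X₁). Then for any λ > 0: P(GJS(T_{X₁}, T_{X_t}, α) ≥ λ) ≤ (n+1)^{|X|}·(N+1)^{|X|}·exp(−nλ). -/

import Mathlib

section AuxGutman
open Finset

lemma aux_prod_count {X : Type*} [Fintype X] [DecidableEq X] {m : ℕ}
    (x : Fin m → X) (f : X → ℝ) :
    ∏ j, f (x j) = ∏ a, f a ^ (Finset.univ.filter fun i => x i = a).card := by
  rw [← Finset.prod_fiberwise_of_maps_to' (fun i _ => Finset.mem_univ (x i)) f]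
  exact Finset.prod_congr rfl fun a _ => (Finset.prod_const _)

lemma aux_sum_count {X : Type*} [Fintype X] [DecidableEq X] {m : ℕ}
    (x : Fin m → X) :
    ∑ a, (Finset.univ.filter fun i => x i = a).card = m := by
  rw [← Finset.card_eq_sum_card_fiberwise (fun i (_ : i ∈ Finset.univ) => Finset.mem_univ (x i))]
  simp

/-- Max-likelihood property of the empirical distribution. -/
lemma aux_ml {X : Type*} [Fintype X] (P : X → ℝ) (hP : ∀ a, 0 ≤ P a)
    (hPs : ∑ a, P a = 1) (k : X → ℕ) (K : ℕ) (hK : 0 < K) (hk : ∑ a, k a = K) :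
    ∏ a, P a ^ k a ≤ ∏ a, ((k a : ℝ) / K) ^ k a := by
  have hK0 : (K : ℝ) ≠ 0 := Nat.cast_ne_zero.2 hK.ne'
  set w : X → ℝ := fun a => (k a : ℝ) / K with hw
  have hwnn : ∀ a, 0 ≤ w a := fun a => div_nonneg (Nat.cast_nonneg _) (Nat.cast_nonneg _)
  have hws : ∑ a, w a = 1 := by
    rw [← Finset.sum_div]; rw [show ∑ a, (k a:ℝ) = K by exact_mod_cast congrArg Nat.cast hk]
    exact div_self hK0
  set z : X → ℝ := fun a => P a * K / k a with hz
  have hznn : ∀ a, 0 ≤ z a := fun a => div_nonneg (mul_nonneg (hP a) (Nat.cast_nonneg _)) (Nat.cast_nonneg _)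
  have hwz : ∀ a, w a * z a = if k a = 0 then 0 else P a := by
    intro a
    by_cases h : k a = 0
    · simp [hw, hz, h]
    · have : (k a : ℝ) ≠ 0 := Nat.cast_ne_zero.2 h
      simp only [hw, hz, if_neg h]
      field_simp
  have hsum : ∑ a, w a * z a ≤ 1 := by
    calc ∑ a, w a * z a = ∑ a, (if k a = 0 then 0 else P a) := by
          exact Finset.sum_congr rfl fun a _ => hwz a
      _ ≤ ∑ a, P a := Finset.sum_le_sum fun a _ => by
          by_cases h : k a = 0 <;> simp [h, hP a]
      _ = 1 := hPs
  have hgm := Real.geom_mean_le_arith_mean_weighted Finset.univ w z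
      (fun a _ => hwnn a) hws (fun a _ => hznn a)
  have hgm1 : ∏ a, z a ^ w a ≤ 1 := hgm.trans hsum
  -- ∏ P^w = ∏ w^w * ∏ z^w
  have key : ∏ a, P a ^ w a ≤ ∏ a, w a ^ w a := by
    have hfac : ∀ a, P a ^ w a = w a ^ w a * z a ^ w a := by
      intro a
      by_cases h : k a = 0
      · have hw0 : w a = 0 := by simp [hw, h]
        simp [hw0]
      · have hka : (k a : ℝ) ≠ 0 := Nat.cast_ne_zero.2 h
        rw [← Real.mul_rpow (hwnn a) (hznn a)]
        congr 1
        rw [hwz a]  -- no, hwz is about w*z as value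
        simp [h]
    calc ∏ a, P a ^ w a = ∏ a, w a ^ w a * z a ^ w a :=
          Finset.prod_congr rfl fun a _ => hfac a
      _ = (∏ a, w a ^ w a) * ∏ a, z a ^ w a := Finset.prod_mul_distrib
      _ ≤ (∏ a, w a ^ w a) * 1 := by
          apply mul_le_mul_of_nonneg_left hgm1
          exact Finset.prod_nonneg fun a _ => Real.rpow_nonneg (hwnn a) _
      _ = ∏ a, w a ^ w a := mul_one _
  -- raise to the K-th power
  have keyK := pow_le_pow_left₀ (Finset.prod_nonneg fun a _ => Real.rpow_nonneg (hP a) _) key K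
  calc ∏ a, P a ^ k a = (∏ a, P a ^ w a) ^ K := by
        rw [← Finset.prod_pow]
        refine Finset.prod_congr rfl fun a _ => ?_
        rw [← Real.rpow_natCast (P a ^ w a) K, ← Real.rpow_mul (hP a),
          div_mul_cancel₀ _ hK0, Real.rpow_natCast]
    _ ≤ (∏ a, w a ^ w a) ^ K := keyK
    _ = ∏ a, w a ^ k a := by
        rw [← Finset.prod_pow]
        refine Finset.prod_congr rfl fun a _ => ?_
        rw [← Real.rpow_natCast (w a ^ w a) K, ← Real.rpow_mul (hwnn a),
          div_mul_cancel₀ _ hK0, Real.rpow_natCast]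

lemma aux_type_sum_le {X : Type*} [Fintype X] [DecidableEq X] (m : ℕ) (hm : 0 < m) :
    ∑ x : Fin m → X, ∏ j, ((Finset.univ.filter fun i => x i = x j).card : ℝ) / m
      ≤ ((m : ℝ) + 1) ^ Fintype.card X := by
  have hm0 : (m : ℝ) ≠ 0 := Nat.cast_ne_zero.2 hm.ne'
  -- the count map into X → Fin (m+1)
  set c : (Fin m → X) → (X → Fin (m + 1)) := fun x a =>
    ⟨(Finset.univ.filter fun i => x i = a).card,
      Nat.lt_succ_of_le ((Finset.card_filter_le _ _).trans_eq (Finset.card_fin m))⟩ with hc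
  set t : Finset (X → Fin (m + 1)) := Finset.univ.image c with ht
  have hmaps : ∀ x ∈ (Finset.univ : Finset (Fin m → X)), c x ∈ t :=
    fun x _ => Finset.mem_image_of_mem c (Finset.mem_univ x)
  rw [← Finset.sum_fiberwise_of_maps_to hmaps]
  -- each fiber contributes at most 1
  have hfiber : ∀ q ∈ t,
      ∑ x ∈ Finset.univ.filter fun x => c x = q,
        ∏ j, ((Finset.univ.filter fun i => x i = x j).card : ℝ) / m ≤ 1 := by
    intro q hq
    obtain ⟨x₀, _, hx₀⟩ := Finset.mem_image.1 hq
    set g : X → ℝ := fun a => ((q a : ℕ) : ℝ) / m with hg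
    have hgnn : ∀ a, 0 ≤ g a := fun a => div_nonneg (Nat.cast_nonneg _) (Nat.cast_nonneg _)
    have hgs : ∑ a, g a = 1 := by
      rw [hg, ← Finset.sum_div]
      have : ∑ a, ((q a : ℕ) : ℝ) = m := by
        have h1 : ∑ a, (q a : ℕ) = m := by
          have := congrFun hx₀
          calc ∑ a, (q a : ℕ) = ∑ a, (Finset.univ.filter fun i => x₀ i = a).card := by
                refine Finset.sum_congr rfl fun a _ => ?_
                rw [← this a]
            _ = m := aux_sum_count x₀
        exact_mod_cast congrArg Nat.cast h1
      rw [this, div_self hm0]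
    calc ∑ x ∈ Finset.univ.filter fun x => c x = q,
          ∏ j, ((Finset.univ.filter fun i => x i = x j).card : ℝ) / m
        = ∑ x ∈ Finset.univ.filter fun x => c x = q, ∏ j, g (x j) := by
          refine Finset.sum_congr rfl fun x hx => ?_
          have hcx : c x = q := (Finset.mem_filter.1 hx).2
          refine Finset.prod_congr rfl fun j _ => ?_
          rw [hg]
          have := congrFun hcx (x j)
          simp only [← this, hc]
      _ ≤ ∑ x : Fin m → X, ∏ j, g (x j) := by
          apply Finset.sum_le_sum_of_subset_of_nonneg (Finset.filter_subset _ _)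
          exact fun x _ _ => Finset.prod_nonneg fun j _ => hgnn (x j)
      _ = (∑ a, g a) ^ m := (Fintype.sum_pow g m).symm
      _ = 1 := by rw [hgs, one_pow]
  calc ∑ q ∈ t, ∑ x ∈ Finset.univ.filter fun x => c x = q,
        ∏ j, ((Finset.univ.filter fun i => x i = x j).card : ℝ) / m
      ≤ ∑ q ∈ t, (1 : ℝ) := Finset.sum_le_sum hfiber
    _ = (t.card : ℝ) := by rw [Finset.sum_const, nsmul_eq_mul, mul_one]
    _ ≤ ((m : ℝ) + 1) ^ Fintype.card X := by
        have : t.card ≤ Fintype.card (X → Fin (m + 1)) := Finset.card_le_univ t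
        have h2 : Fintype.card (X → Fin (m + 1)) = (m + 1) ^ Fintype.card X := by
          simp [Fintype.card_fun]
        calc (t.card : ℝ) ≤ ((m + 1) ^ Fintype.card X : ℕ) := by exact_mod_cast this.trans_eq h2
          _ = ((m : ℝ) + 1) ^ Fintype.card X := by push_cast; ring

lemma aux_exp_log (c : ℕ) (T M : ℝ) (hT : c ≠ 0 → 0 < T) (hM : c ≠ 0 → 0 < M) :
    Real.exp (-(c : ℝ) * Real.log (T / M)) * T ^ c = M ^ c := by
  rcases eq_or_ne c 0 with h | h
  · simp [h]
  · have hT' := hT h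
    have hM' := hM h
    have hdiv : 0 < T / M := div_pos hT' hM'
    have h1 : Real.exp (-(c : ℝ) * Real.log (T / M)) = (T / M) ^ (-(c : ℝ)) := by
      rw [Real.rpow_def_of_pos hdiv, mul_comm]
    rw [h1, Real.rpow_neg hdiv.le, Real.rpow_natCast, ← inv_pow, inv_div,
      ← mul_pow, div_mul_cancel₀ _ hT'.ne']

lemma aux_identity {X : Type*} [Fintype X] (N n : ℕ) (hn : 0 < n) (α : ℝ) (hα : 0 < α)
    (hN : (N : ℝ) = α * n) (c1 c2 : X → ℕ) :
    ∏ a, (((c1 a : ℝ) + (c2 a : ℝ)) / ((N : ℝ) + n)) ^ (c1 a + c2 a) =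
      Real.exp (-(n : ℝ) *
        (α * ∑ a, ((c1 a : ℝ) / N) *
            Real.log (((c1 a : ℝ) / N) /
              ((α * ((c1 a : ℝ) / N) + (c2 a : ℝ) / n) / (1 + α))) +
         ∑ a, ((c2 a : ℝ) / n) *
            Real.log (((c2 a : ℝ) / n) /
              ((α * ((c1 a : ℝ) / N) + (c2 a : ℝ) / n) / (1 + α))))) *
      (∏ a, ((c1 a : ℝ) / N) ^ c1 a) * (∏ a, ((c2 a : ℝ) / n) ^ c2 a) := by
  have hn0 : (n : ℝ) ≠ 0 := Nat.cast_ne_zero.2 hn.ne'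
  have hNpos : (0 : ℝ) < N := by rw [hN]; positivity
  have hN0 : (N : ℝ) ≠ 0 := hNpos.ne'
  have hα0 : α ≠ 0 := hα.ne'
  have hnpos : (0 : ℝ) < n := by positivity
  set M : X → ℝ := fun a => ((c1 a : ℝ) + (c2 a : ℝ)) / ((N : ℝ) + n) with hMdef
  have hMeq : ∀ a, (α * ((c1 a : ℝ) / N) + (c2 a : ℝ) / n) / (1 + α) = M a := by
    intro a
    rw [hMdef, hN]
    field_simp
    ring
  have hexp : -(n : ℝ) *
        (α * ∑ a, ((c1 a : ℝ) / N) * Real.log (((c1 a : ℝ) / N) / M a) +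
         ∑ a, ((c2 a : ℝ) / n) * Real.log (((c2 a : ℝ) / n) / M a)) =
      (∑ a, -(c1 a : ℝ) * Real.log (((c1 a : ℝ) / N) / M a)) +
      (∑ a, -(c2 a : ℝ) * Real.log (((c2 a : ℝ) / n) / M a)) := by
    have e1 : ∑ a, ((c1 a : ℝ) / N) * Real.log (((c1 a : ℝ) / N) / M a) =
        (∑ a, (c1 a : ℝ) * Real.log (((c1 a : ℝ) / N) / M a)) / N := by
      rw [Finset.sum_div]
      exact Finset.sum_congr rfl fun a _ => (div_mul_eq_mul_div _ _ _)
    have e2 : ∑ a, ((c2 a : ℝ) / n) * Real.log (((c2 a : ℝ) / n) / M a) =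
        (∑ a, (c2 a : ℝ) * Real.log (((c2 a : ℝ) / n) / M a)) / n := by
      rw [Finset.sum_div]
      exact Finset.sum_congr rfl fun a _ => (div_mul_eq_mul_div _ _ _)
    simp only [neg_mul]
    rw [e1, e2, Finset.sum_neg_distrib, Finset.sum_neg_distrib, hN]
    field_simp
    ring
  simp only [hMeq]
  rw [hexp, Real.exp_add, Real.exp_sum, Real.exp_sum]
  have key1 : ∏ a, Real.exp (-(c1 a : ℝ) * Real.log (((c1 a : ℝ) / N) / M a)) *
      ((c1 a : ℝ) / N) ^ c1 a = ∏ a, M a ^ c1 a := by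
    refine Finset.prod_congr rfl fun a _ => ?_
    refine aux_exp_log _ _ _ (fun h => ?_) (fun h => ?_)
    · have : 0 < (c1 a : ℝ) := by exact_mod_cast Nat.pos_of_ne_zero h
      positivity
    · have h1 : 0 < (c1 a : ℝ) := by exact_mod_cast Nat.pos_of_ne_zero h
      have h2 : (0:ℝ) ≤ (c2 a : ℝ) := Nat.cast_nonneg _
      rw [hMdef]
      have : 0 < (N:ℝ) + n := by positivity
      exact div_pos (by linarith) this
  have key2 : ∏ a, Real.exp (-(c2 a : ℝ) * Real.log (((c2 a : ℝ) / n) / M a)) *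
      ((c2 a : ℝ) / n) ^ c2 a = ∏ a, M a ^ c2 a := by
    refine Finset.prod_congr rfl fun a _ => ?_
    refine aux_exp_log _ _ _ (fun h => ?_) (fun h => ?_)
    · have : 0 < (c2 a : ℝ) := by exact_mod_cast Nat.pos_of_ne_zero h
      positivity
    · have h1 : 0 < (c2 a : ℝ) := by exact_mod_cast Nat.pos_of_ne_zero h
      have h2 : (0:ℝ) ≤ (c1 a : ℝ) := Nat.cast_nonneg _
      rw [hMdef]
      have : 0 < (N:ℝ) + n := by positivity
      exact div_pos (by linarith) this
  calc ∏ a, M a ^ (c1 a + c2 a) = (∏ a, M a ^ c1 a) * ∏ a, M a ^ c2 a := by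
        rw [← Finset.prod_mul_distrib]
        exact Finset.prod_congr rfl fun a _ => pow_add _ _ _
    _ = _ := by
        rw [← key1, ← key2, Finset.prod_mul_distrib, Finset.prod_mul_distrib]
        ring
end AuxGutman

/-- **type-I error of Gutman's test.** Let `X₁ ∈ X^N` and `X_t ∈ X^n` be
independent i.i.d. sequences, both from `P₁`, with `N = α·n`. Then for any `λ > 0`,
`P(GJS(T_{X₁}, T_{X_t}, α) ≥ λ) ≤ (n+1)^{|X|}·(N+1)^{|X|}·exp(−nλ)`. -/
theorem gutman_type_one_error_bound
    {X : Type*} [Fintype X] [DecidableEq X]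
    (N n : ℕ) (hn : 0 < n) (α : ℝ) (hα : 0 < α) (hN : (N : ℝ) = α * n)
    (P₁ : X → ℝ) (hPnonneg : ∀ a, 0 ≤ P₁ a) (hPsum : ∑ a, P₁ a = 1)
    (G : (X → ℝ) → (X → ℝ) → ℝ)
    (hG : ∀ p q : X → ℝ,
      G p q = α * ∑ a, p a * Real.log (p a / ((α * p a + q a) / (1 + α))) +
              ∑ a, q a * Real.log (q a / ((α * p a + q a) / (1 + α))))
    (lam : ℝ) (hlam : 0 < lam) :
    (∑ x₁ : Fin N → X, ∑ xt : Fin n → X,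
        if lam ≤ G (fun a => ((Finset.univ.filter fun i => x₁ i = a).card : ℝ) / N)
                   (fun a => ((Finset.univ.filter fun i => xt i = a).card : ℝ) / n)
        then (∏ j, P₁ (x₁ j)) * (∏ j, P₁ (xt j)) else 0) ≤
      ((n : ℝ) + 1) ^ Fintype.card X * ((N : ℝ) + 1) ^ Fintype.card X *
        Real.exp (-(n : ℝ) * lam) := by
  have hnR : (0:ℝ) < n := by exact_mod_cast hn
  have hNR : (0:ℝ) < N := by rw [hN]; positivity
  have hNpos : 0 < N := by exact_mod_cast hNR
  have hN0 : (N : ℝ) ≠ 0 := hNR.ne'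
  have hn0 : (n : ℝ) ≠ 0 := hnR.ne'
  set F1 : (Fin N → X) → ℝ := fun x =>
    ∏ j, ((Finset.univ.filter fun i => x i = x j).card : ℝ) / N with hF1
  set F2 : (Fin n → X) → ℝ := fun x =>
    ∏ j, ((Finset.univ.filter fun i => x i = x j).card : ℝ) / n with hF2
  have hF1nn : ∀ x, 0 ≤ F1 x := fun x =>
    Finset.prod_nonneg fun j _ => div_nonneg (Nat.cast_nonneg _) (Nat.cast_nonneg _)
  have hF2nn : ∀ x, 0 ≤ F2 x := fun x =>
    Finset.prod_nonneg fun j _ => div_nonneg (Nat.cast_nonneg _) (Nat.cast_nonneg _)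
  have hbound : ∀ (x₁ : Fin N → X) (xt : Fin n → X),
      (if lam ≤ G (fun a => ((Finset.univ.filter fun i => x₁ i = a).card : ℝ) / N)
                  (fun a => ((Finset.univ.filter fun i => xt i = a).card : ℝ) / n)
       then (∏ j, P₁ (x₁ j)) * (∏ j, P₁ (xt j)) else 0) ≤
        Real.exp (-(n : ℝ) * lam) * F1 x₁ * F2 xt := by
    intro x₁ xt
    have hrhs : 0 ≤ Real.exp (-(n : ℝ) * lam) * F1 x₁ * F2 xt :=
      mul_nonneg (mul_nonneg (Real.exp_nonneg _) (hF1nn x₁)) (hF2nn xt)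
    split_ifs with hif
    · set c1 : X → ℕ := fun a => (Finset.univ.filter fun i => x₁ i = a).card with hc1
      set c2 : X → ℕ := fun a => (Finset.univ.filter fun i => xt i = a).card with hc2
      have hsum1 : ∑ a, c1 a = N := aux_sum_count x₁
      have hsum2 : ∑ a, c2 a = n := aux_sum_count xt
      have step1 : (∏ j, P₁ (x₁ j)) * (∏ j, P₁ (xt j)) = ∏ a, P₁ a ^ (c1 a + c2 a) := by
        rw [aux_prod_count x₁ P₁, aux_prod_count xt P₁, ← Finset.prod_mul_distrib]
        exact Finset.prod_congr rfl fun a _ => (pow_add _ _ _).symm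
      have step2 : ∏ a, P₁ a ^ (c1 a + c2 a) ≤
          ∏ a, (((c1 a : ℝ) + (c2 a : ℝ)) / ((N : ℝ) + n)) ^ (c1 a + c2 a) := by
        have := aux_ml P₁ hPnonneg hPsum (fun a => c1 a + c2 a) (N + n)
          (Nat.add_pos_left hNpos n) (by rw [Finset.sum_add_distrib, hsum1, hsum2])
        convert this using 2 with a
        push_cast
        ring_nf
      have step3 := aux_identity N n hn α hα hN c1 c2
      have hGval : G (fun a => ((Finset.univ.filter fun i => x₁ i = a).card : ℝ) / N)
          (fun a => ((Finset.univ.filter fun i => xt i = a).card : ℝ) / n) =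
          α * ∑ a, ((c1 a : ℝ) / N) *
              Real.log (((c1 a : ℝ) / N) /
                ((α * ((c1 a : ℝ) / N) + (c2 a : ℝ) / n) / (1 + α))) +
           ∑ a, ((c2 a : ℝ) / n) *
              Real.log (((c2 a : ℝ) / n) /
                ((α * ((c1 a : ℝ) / N) + (c2 a : ℝ) / n) / (1 + α))) := by
        rw [hG]
      have step4 : ∏ a, (((c1 a : ℝ) + (c2 a : ℝ)) / ((N : ℝ) + n)) ^ (c1 a + c2 a) ≤
          Real.exp (-(n : ℝ) * lam) * (∏ a, ((c1 a : ℝ) / N) ^ c1 a) *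
            (∏ a, ((c2 a : ℝ) / n) ^ c2 a) := by
        rw [step3]
        have hmono : Real.exp (-(n : ℝ) *
            (α * ∑ a, ((c1 a : ℝ) / N) *
                Real.log (((c1 a : ℝ) / N) /
                  ((α * ((c1 a : ℝ) / N) + (c2 a : ℝ) / n) / (1 + α))) +
             ∑ a, ((c2 a : ℝ) / n) *
                Real.log (((c2 a : ℝ) / n) /
                  ((α * ((c1 a : ℝ) / N) + (c2 a : ℝ) / n) / (1 + α))))) ≤
            Real.exp (-(n : ℝ) * lam) := by
          apply Real.exp_le_exp.2
          have hge : lam ≤ α * ∑ a, ((c1 a : ℝ) / N) *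
              Real.log (((c1 a : ℝ) / N) /
                ((α * ((c1 a : ℝ) / N) + (c2 a : ℝ) / n) / (1 + α))) +
             ∑ a, ((c2 a : ℝ) / n) *
                Real.log (((c2 a : ℝ) / n) /
                  ((α * ((c1 a : ℝ) / N) + (c2 a : ℝ) / n) / (1 + α))) := by
            rw [← hGval]; exact hif
          nlinarith
        have h1nn : 0 ≤ ∏ a, ((c1 a : ℝ) / N) ^ c1 a :=
          Finset.prod_nonneg fun a _ => pow_nonneg (div_nonneg (Nat.cast_nonneg _) (Nat.cast_nonneg _)) _
        have h2nn : 0 ≤ ∏ a, ((c2 a : ℝ) / n) ^ c2 a :=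
          Finset.prod_nonneg fun a _ => pow_nonneg (div_nonneg (Nat.cast_nonneg _) (Nat.cast_nonneg _)) _
        exact mul_le_mul_of_nonneg_right (mul_le_mul_of_nonneg_right hmono h1nn) h2nn
      have hfin1 : F1 x₁ = ∏ a, ((c1 a : ℝ) / N) ^ c1 a := by
        rw [hF1]
        exact aux_prod_count x₁ (fun a => (c1 a : ℝ) / N)
      have hfin2 : F2 xt = ∏ a, ((c2 a : ℝ) / n) ^ c2 a := by
        rw [hF2]
        exact aux_prod_count xt (fun a => (c2 a : ℝ) / n)
      calc (∏ j, P₁ (x₁ j)) * (∏ j, P₁ (xt j)) = ∏ a, P₁ a ^ (c1 a + c2 a) := step1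
        _ ≤ ∏ a, (((c1 a : ℝ) + (c2 a : ℝ)) / ((N : ℝ) + n)) ^ (c1 a + c2 a) := step2
        _ ≤ Real.exp (-(n : ℝ) * lam) * (∏ a, ((c1 a : ℝ) / N) ^ c1 a) *
            (∏ a, ((c2 a : ℝ) / n) ^ c2 a) := step4
        _ = Real.exp (-(n : ℝ) * lam) * F1 x₁ * F2 xt := by rw [hfin1, hfin2]
    · exact hrhs
  calc (∑ x₁ : Fin N → X, ∑ xt : Fin n → X,
        if lam ≤ G (fun a => ((Finset.univ.filter fun i => x₁ i = a).card : ℝ) / N)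
                   (fun a => ((Finset.univ.filter fun i => xt i = a).card : ℝ) / n)
        then (∏ j, P₁ (x₁ j)) * (∏ j, P₁ (xt j)) else 0)
      ≤ ∑ x₁ : Fin N → X, ∑ xt : Fin n → X, Real.exp (-(n : ℝ) * lam) * F1 x₁ * F2 xt :=
        Finset.sum_le_sum fun x₁ _ => Finset.sum_le_sum fun xt _ => hbound x₁ xt
    _ = Real.exp (-(n : ℝ) * lam) * ((∑ x₁ : Fin N → X, F1 x₁) * ∑ xt : Fin n → X, F2 xt) := by
        rw [Finset.sum_mul_sum, Finset.mul_sum]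
        refine Finset.sum_congr rfl fun x₁ _ => ?_
        rw [Finset.mul_sum]
        exact Finset.sum_congr rfl fun xt _ => by ring
    _ ≤ Real.exp (-(n : ℝ) * lam) *
        (((N : ℝ) + 1) ^ Fintype.card X * ((n : ℝ) + 1) ^ Fintype.card X) := by
        apply mul_le_mul_of_nonneg_left _ (Real.exp_nonneg _)
        exact mul_le_mul (aux_type_sum_le N hNpos) (aux_type_sum_le n hn)
          (Finset.sum_nonneg fun x _ => hF2nn x) (by positivity)
    _ = ((n : ℝ) + 1) ^ Fintype.card X * ((N : ℝ) + 1) ^ Fintype.card X *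
        Real.exp (-(n : ℝ) * lam) := by ring
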